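/- Let X be a Fréchet space with seminorms (p_j) and suppose (e_n)_{n≥1} is a sequence in X with p_1(e_n) > 0 for all n, such that there exists a constant Γ ≥ 1 with: for every 1 ≤ j ≤ L₀ and every L₁ > L₀ and all scalars a_j,…,a_{L₁}, p_j(Σ_{n=j}^{L₀} a_n e_n) ≤ Γ·p_j(Σ_{n=j}^{L₁} a_n e_n). Then (e_n) is a basic sequence, i.e., (e_n) is a Schauder basis of the closed linear span of {e_n : n ≥ 1}. -/

import Mathlib

open Filter Finset Topology

/-- Fréchet basic sequence criterion: if `p_1(e_n) > 0` for all
`n` and `p_j(∑_{n=j}^{L₀} a_n e_n) ≤ Γ p_j(∑_{n=j}^{L₁} a_n e_n)` for all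
`j ≤ L₀ < L₁`, then `(e_n)` is a Schauder basis of the closed span of the
`e_n`. -/
theorem stmt_18 {X : Type*} [AddCommGroup X] [Module ℝ X] [UniformSpace X]
    [IsUniformAddGroup X] [CompleteSpace X] [ContinuousSMul ℝ X]
    (p : SeminormFamily ℝ X ℕ) (hp : WithSeminorms p)
    (hmono : Monotone p) (hsep : ∀ x : X, x ≠ 0 → ∃ j, p j x ≠ 0)
    (e : ℕ → X) (hpos : ∀ n, 0 < p 0 (e n))
    (Γ : ℝ) (hΓ : 1 ≤ Γ)
    (hproj : ∀ j L₀ L₁ : ℕ, j ≤ L₀ → L₀ < L₁ → ∀ a : ℕ → ℝ,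
      p j (∑ n ∈ Icc j L₀, a n • e n) ≤ Γ * p j (∑ n ∈ Icc j L₁, a n • e n)) :
    ∀ x ∈ (Submodule.span ℝ (Set.range e)).topologicalClosure,
      ∃! a : ℕ → ℝ,
        Tendsto (fun N => ∑ n ∈ range N, a n • e n) atTop (nhds x) := by
  have hΓ0 : (0:ℝ) < Γ := lt_of_lt_of_le one_pos hΓ
  have hIcc : ∀ m : ℕ, Icc 0 m = range (m + 1) := by
    intro m; ext x; simp [Nat.lt_succ_iff]
  -- uniform bound for initial sums in `p 0`
  have key0 : ∀ (c : ℕ → ℝ) (K N : ℕ), K ≤ N →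
      p 0 (∑ n ∈ range K, c n • e n) ≤ Γ * p 0 (∑ n ∈ range N, c n • e n) := by
    intro c K N hKN
    rcases Nat.eq_zero_or_pos K with hK | hK
    · subst hK
      simp only [range_zero, sum_empty, map_zero]
      exact mul_nonneg (le_of_lt hΓ0) (apply_nonneg _ _)
    rcases eq_or_lt_of_le hKN with h | h
    · subst h
      nlinarith [apply_nonneg (p 0) (∑ n ∈ range K, c n • e n)]
    · have := hproj 0 (K-1) (N-1) (Nat.zero_le _) (by omega) c
      rwa [hIcc, hIcc, (by omega : K - 1 + 1 = K), (by omega : N - 1 + 1 = N)] at this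
  -- coefficient bound
  have coefb : ∀ (c : ℕ → ℝ) (N m : ℕ), m < N →
      |c m| * p 0 (e m) ≤ 2 * Γ * p 0 (∑ n ∈ range N, c n • e n) := by
    intro c N m hmN
    have h1 : c m • e m = (∑ n ∈ range (m+1), c n • e n) - ∑ n ∈ range m, c n • e n := by
      rw [Finset.sum_range_succ]; abel
    have h2 : p 0 (c m • e m) ≤
        p 0 (∑ n ∈ range (m+1), c n • e n) + p 0 (∑ n ∈ range m, c n • e n) := by
      rw [h1]; exact map_sub_le_add _ _ _
    have h3 := key0 c (m+1) N hmN
    have h4 := key0 c m N (by omega)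
    have h5 : p 0 (c m • e m) = |c m| * p 0 (e m) := by
      rw [map_smul_eq_mul, Real.norm_eq_abs]
    linarith
  -- the equicontinuity constants
  set D : ℕ → ℝ := fun j => 2 * Γ * ∑ n ∈ range j, p j (e n) / p 0 (e n) with hDdef
  have hD0 : ∀ j, 0 ≤ D j := by
    intro j
    apply mul_nonneg (by linarith)
    exact Finset.sum_nonneg fun n _ => div_nonneg (apply_nonneg _ _) (le_of_lt (hpos n))
  set C : ℕ → ℝ := fun j => D j + Γ * (1 + D j) with hCdef
  have hC0 : ∀ j, 0 ≤ C j := by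
    intro j
    have := hD0 j
    have : 0 ≤ Γ * (1 + D j) := mul_nonneg (le_of_lt hΓ0) (by linarith)
    simp only [hCdef]
    linarith [hD0 j]
  -- triangle inequality for sums
  have tri : ∀ (j : ℕ) (f : ℕ → X) (s : Finset ℕ), p j (∑ n ∈ s, f n) ≤ ∑ n ∈ s, p j (f n) := by
    intro j f s
    induction s using Finset.cons_induction with
    | empty => simp
    | cons i s his ih =>
      rw [Finset.sum_cons, Finset.sum_cons]
      exact le_trans (map_add_le_add _ _ _) (by linarith)
  -- head bound
  have head : ∀ (c : ℕ → ℝ) (j K M : ℕ), K ≤ j → K ≤ M →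
      p j (∑ n ∈ range K, c n • e n) ≤ D j * p j (∑ n ∈ range M, c n • e n) := by
    intro c j K M hKj hKM
    set y := ∑ n ∈ range M, c n • e n with hy
    have hp0j : p 0 y ≤ p j y := hmono (Nat.zero_le j) y
    have step1 : p j (∑ n ∈ range K, c n • e n) ≤ ∑ n ∈ range K, |c n| * p j (e n) := by
      refine le_trans (tri j _ _) ?_
      refine Finset.sum_le_sum fun n _ => ?_
      rw [map_smul_eq_mul, Real.norm_eq_abs]
    have step2 : ∀ n ∈ range K,
        |c n| * p j (e n) ≤ (2 * Γ * p 0 y) * (p j (e n) / p 0 (e n)) := by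
      intro n hn
      have hn' : n < M := lt_of_lt_of_le (Finset.mem_range.mp hn) hKM
      have h1 : |c n| * p 0 (e n) ≤ 2 * Γ * p 0 y := coefb c M n hn'
      have h2 : 0 < p 0 (e n) := hpos n
      have h3 : |c n| ≤ 2 * Γ * p 0 y / p 0 (e n) := by
        rw [le_div_iff₀ h2]; exact h1
      calc |c n| * p j (e n) ≤ (2 * Γ * p 0 y / p 0 (e n)) * p j (e n) :=
            mul_le_mul_of_nonneg_right h3 (apply_nonneg _ _)
        _ = (2 * Γ * p 0 y) * (p j (e n) / p 0 (e n)) := by ring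
    calc p j (∑ n ∈ range K, c n • e n) ≤ ∑ n ∈ range K, |c n| * p j (e n) := step1
      _ ≤ ∑ n ∈ range K, (2 * Γ * p 0 y) * (p j (e n) / p 0 (e n)) :=
          Finset.sum_le_sum step2
      _ ≤ ∑ n ∈ range j, (2 * Γ * p 0 y) * (p j (e n) / p 0 (e n)) := by
          refine Finset.sum_le_sum_of_subset_of_nonneg
            (Finset.range_subset_range.mpr hKj) fun n _ _ => ?_
          exact mul_nonneg (by positivity) (div_nonneg (apply_nonneg _ _) (hpos n).le)
      _ = D j * p 0 y := by rw [hDdef, ← Finset.mul_sum]; ring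
      _ ≤ D j * p j y := mul_le_mul_of_nonneg_left hp0j (hD0 j)
  -- equicontinuity bound
  have hCb : ∀ (c : ℕ → ℝ) (j N M : ℕ), N ≤ M →
      p j (∑ n ∈ range N, c n • e n) ≤ C j * p j (∑ n ∈ range M, c n • e n) := by
    intro c j N M hNM
    set y := ∑ n ∈ range M, c n • e n with hy
    have hpy : 0 ≤ p j y := apply_nonneg _ _
    by_cases hNj : N ≤ j
    · have h := head c j N M hNj hNM
      have : D j * p j y ≤ C j * p j y := by
        have h2 : 0 ≤ Γ * (1 + D j) := mul_nonneg hΓ0.le (by linarith [hD0 j])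
        simp only [hCdef]
        nlinarith
      linarith
    · push_neg at hNj
      have hjN : j < N := hNj
      have hdecomp : ∀ M' : ℕ, j < M' →
          ∑ n ∈ range M', c n • e n
            = (∑ n ∈ range j, c n • e n) + ∑ n ∈ Icc j (M'-1), c n • e n := by
        intro M' hM'
        have h1 : Icc j (M'-1) = Ico j M' := by
          ext t; simp only [mem_Icc, mem_Ico]; omega
        rw [h1]
        simp only [Finset.range_eq_Ico]
        exact (Finset.sum_Ico_consecutive _ (Nat.zero_le j) hM'.le).symm
      have hheadb : p j (∑ n ∈ range j, c n • e n) ≤ D j * p j y :=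
        head c j j M le_rfl (by omega)
      have hmid : p j (∑ n ∈ Icc j (N-1), c n • e n) ≤ Γ * p j (∑ n ∈ Icc j (M-1), c n • e n) := by
        rcases eq_or_lt_of_le hNM with h | h
        · subst h
          nlinarith [apply_nonneg (p j) (∑ n ∈ Icc j (N-1), c n • e n)]
        · exact hproj j (N-1) (M-1) (by omega) (by omega) c
      have htail : p j (∑ n ∈ Icc j (M-1), c n • e n) ≤ p j y + D j * p j y := by
        have h1 : ∑ n ∈ Icc j (M-1), c n • e n = y - ∑ n ∈ range j, c n • e n := by
          rw [hy, hdecomp M (by omega)]; abel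
        rw [h1]
        calc p j (y - ∑ n ∈ range j, c n • e n)
            ≤ p j y + p j (∑ n ∈ range j, c n • e n) := map_sub_le_add _ _ _
          _ ≤ p j y + D j * p j y := by linarith
      have hfull : p j (∑ n ∈ range N, c n • e n)
          ≤ p j (∑ n ∈ range j, c n • e n) + p j (∑ n ∈ Icc j (N-1), c n • e n) := by
        rw [hdecomp N hjN]; exact map_add_le_add _ _ _
      have hmul : Γ * p j (∑ n ∈ Icc j (M-1), c n • e n) ≤ Γ * (p j y + D j * p j y) :=
        mul_le_mul_of_nonneg_left htail hΓ0.le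
      simp only [hCdef]
      nlinarith
  -- continuity of seminorms
  have hpcont : ∀ j, Continuous (p j) := fun j => hp.continuous_seminorm j
  -- uniqueness of expansions
  have huniq : ∀ (u v : ℕ → ℝ) (z : X),
      Tendsto (fun N => ∑ n ∈ range N, u n • e n) atTop (nhds z) →
      Tendsto (fun N => ∑ n ∈ range N, v n • e n) atTop (nhds z) → u = v := by
    intro u v z hu hv
    set c : ℕ → ℝ := fun n => u n - v n with hcdef
    have hS0 : Tendsto (fun N => ∑ n ∈ range N, c n • e n) atTop (nhds 0) := by
      have := hu.sub hv
      simpa [hcdef, sub_smul, Finset.sum_sub_distrib] using this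
    have hP0 : Tendsto (fun N => p 0 (∑ n ∈ range N, c n • e n)) atTop (nhds 0) := by
      have := ((hpcont 0).tendsto 0).comp hS0
      simpa [Function.comp_def] using this
    have hzero : ∀ K, p 0 (∑ n ∈ range K, c n • e n) = 0 := by
      intro K
      have h1 : p 0 (∑ n ∈ range K, c n • e n) ≤ 0 := by
        have hT : Tendsto (fun N => Γ * p 0 (∑ n ∈ range N, c n • e n)) atTop (𝓝 (Γ * 0)) :=
          hP0.const_mul Γ
        rw [mul_zero] at hT
        refine ge_of_tendsto hT ?_
        filter_upwards [eventually_ge_atTop K] with N hN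
        exact key0 c K N hN
      exact le_antisymm h1 (apply_nonneg _ _)
    funext m
    have h1 : |c m| * p 0 (e m) ≤ 2 * Γ * p 0 (∑ n ∈ range (m+1), c n • e n) :=
      coefb c (m+1) m (by omega)
    rw [hzero (m+1), mul_zero] at h1
    have h2 : |c m| = 0 := by
      have := hpos m
      nlinarith [abs_nonneg (c m)]
    have : c m = 0 := abs_eq_zero.mp h2
    simpa [hcdef, sub_eq_zero] using this
  -- main part
  intro x hx
  haveI : FirstCountableTopology X := hp.firstCountableTopology
  have hx' : x ∈ closure (Submodule.span ℝ (Set.range e) : Set X) := hx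
  obtain ⟨y, hy_mem, hy_lim⟩ := mem_closure_iff_seq_limit.mp hx'
  -- coefficients of the approximating sequence
  have hcoef : ∀ k, ∃ c : ℕ →₀ ℝ, (c.sum fun i r => r • e i) = y k := by
    intro k
    exact (Finsupp.mem_span_range_iff_exists_finsupp).mp (hy_mem k)
  choose c hc using hcoef
  set b : ℕ → ℕ → ℝ := fun k n => c k n with hbdef
  set L : ℕ → ℕ := fun k => (c k).support.sup id + 1 with hLdef
  have hsum : ∀ k N, L k ≤ N → (∑ n ∈ range N, b k n • e n) = y k := by
    intro k N hN
    have hsub : (c k).support ⊆ range N := by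
      intro n hn
      have h1 : id n ≤ (c k).support.sup id := Finset.le_sup hn
      simp only [id] at h1
      refine Finset.mem_range.mpr ?_
      have h2 : (c k).support.sup id + 1 ≤ N := hN
      omega
    rw [← hc k, Finsupp.sum_of_support_subset (c k) hsub _ (fun i _ => zero_smul ℝ (e i))]
  -- pairwise coefficient bound
  have hpair : ∀ k l m, |b k m - b l m| * p 0 (e m) ≤ 2 * Γ * p 0 (y k - y l) := by
    intro k l m
    set N := max (max (L k) (L l)) (m+1) with hNdef
    have hLk : L k ≤ N := le_trans (le_max_left _ _) (le_max_left _ _)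
    have hLl : L l ≤ N := le_trans (le_max_right _ _) (le_max_left _ _)
    have hm : m < N := lt_of_lt_of_le (Nat.lt_succ_self m) (le_max_right _ _)
    have h1 := coefb (fun n => b k n - b l n) N m hm
    have h2 : ∑ n ∈ range N, (b k n - b l n) • e n = y k - y l := by
      rw [show (fun n => (b k n - b l n) • e n) = fun n => b k n • e n - b l n • e n from
        funext fun n => sub_smul _ _ _, Finset.sum_sub_distrib, hsum k N hLk, hsum l N hLl]
    rwa [h2] at h1
  -- seminorm convergence
  have hpj_lim : ∀ j, Tendsto (fun k => p j (y k - x)) atTop (nhds 0) := by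
    intro j
    have h1 : Tendsto (fun k => y k - x) atTop (nhds 0) := by
      simpa using hy_lim.sub (tendsto_const_nhds (x := x))
    have := ((hpcont j).tendsto 0).comp h1
    simpa [Function.comp_def] using this
  -- coefficients are Cauchy
  have hcau : ∀ m, CauchySeq fun k => b k m := by
    intro m
    rw [Metric.cauchySeq_iff]
    intro ε hε
    have hem := hpos m
    have hεm : 0 < ε * p 0 (e m) / (4 * Γ) := by positivity
    have := (hpj_lim 0).eventually (gt_mem_nhds hεm)
    obtain ⟨K, hK⟩ := this.exists_forall_of_atTop
    refine ⟨K, fun k hk l hl => ?_⟩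
    have h1 := hpair k l m
    have h2 : p 0 (y k - y l) ≤ p 0 (y k - x) + p 0 (y l - x) := by
      have h3 : y k - y l = (y k - x) - (y l - x) := by abel
      rw [h3]
      exact map_sub_le_add _ _ _
    have h4 := hK k hk
    have h5 := hK l hl
    rw [Real.dist_eq]
    have hpe := hpos m
    have h6 : |b k m - b l m| * p 0 (e m) < ε * p 0 (e m) := by
      have h7 := mul_le_mul_of_nonneg_left h2 (by linarith : (0:ℝ) ≤ 2 * Γ)
      have h8 : p 0 (y k - x) + p 0 (y l - x) < 2 * (ε * p 0 (e m) / (4 * Γ)) := by linarith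
      have h9 : 2 * Γ * (p 0 (y k - x) + p 0 (y l - x))
          < 2 * Γ * (2 * (ε * p 0 (e m) / (4 * Γ))) :=
        mul_lt_mul_of_pos_left h8 (by linarith)
      have h10 : 2 * Γ * (2 * (ε * p 0 (e m) / (4 * Γ))) = ε * p 0 (e m) := by
        field_simp; ring
      linarith
    exact lt_of_mul_lt_mul_right (by linarith) hpe.le
  have hA : ∀ m, ∃ A : ℝ, Tendsto (fun k => b k m) atTop (nhds A) := fun m =>
    cauchySeq_tendsto_of_complete (hcau m)
  choose a ha using hA
  -- partial sums with coefficients of y l converge to partial sums of a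
  have hSNlim : ∀ N, Tendsto (fun l => ∑ n ∈ range N, b l n • e n) atTop
      (nhds (∑ n ∈ range N, a n • e n)) := by
    intro N
    exact tendsto_finset_sum _ fun n _ => (ha n).smul_const (e n)
  -- the key estimate
  have hkey : ∀ j k N, p j ((∑ n ∈ range N, a n • e n) - ∑ n ∈ range N, b k n • e n)
      ≤ C j * p j (x - y k) := by
    intro j k N
    have hTl : Tendsto
        (fun l => p j ((∑ n ∈ range N, b l n • e n) - ∑ n ∈ range N, b k n • e n)) atTop
        (nhds (p j ((∑ n ∈ range N, a n • e n) - ∑ n ∈ range N, b k n • e n))) := by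
      have h1 : Tendsto (fun l => (∑ n ∈ range N, b l n • e n) - ∑ n ∈ range N, b k n • e n)
          atTop (nhds ((∑ n ∈ range N, a n • e n) - ∑ n ∈ range N, b k n • e n)) :=
        (hSNlim N).sub tendsto_const_nhds
      exact ((hpcont j).tendsto _).comp h1
    have hRl : Tendsto (fun l => C j * p j (y l - y k)) atTop (nhds (C j * p j (x - y k))) := by
      have h1 : Tendsto (fun l => y l - y k) atTop (nhds (x - y k)) :=
        hy_lim.sub tendsto_const_nhds
      exact (((hpcont j).tendsto _).comp h1).const_mul (C j)
    refine le_of_tendsto_of_tendsto' hTl hRl fun l => ?_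
    set M := max N (max (L l) (L k)) with hM
    have hNM : N ≤ M := le_max_left _ _
    have hLl : L l ≤ M := le_trans (le_max_left _ _) (le_max_right _ _)
    have hLk : L k ≤ M := le_trans (le_max_right _ _) (le_max_right _ _)
    have h2 := hCb (fun n => b l n - b k n) j N M hNM
    have heq : ∀ N' : ℕ, ∑ n ∈ range N', (b l n - b k n) • e n
        = (∑ n ∈ range N', b l n • e n) - ∑ n ∈ range N', b k n • e n := by
      intro N'
      rw [show (fun n => (b l n - b k n) • e n) = fun n => b l n • e n - b k n • e n from
        funext fun n => sub_smul _ _ _, Finset.sum_sub_distrib]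
    rw [heq N, heq M, hsum l M hLl, hsum k M hLk] at h2
    exact h2
  -- existence
  have hexist : Tendsto (fun N => ∑ n ∈ range N, a n • e n) atTop (nhds x) := by
    rw [hp.tendsto_nhds]
    intro j ε hε
    have hCj1 : (0:ℝ) < C j + 1 := by linarith [hC0 j]
    have hev : ∀ᶠ k in atTop, (C j + 1) * p j (y k - x) < ε := by
      have h1 : Tendsto (fun k => (C j + 1) * p j (y k - x)) atTop (nhds 0) := by
        simpa using (hpj_lim j).const_mul (C j + 1)
      exact h1.eventually (gt_mem_nhds hε)
    obtain ⟨k, hk⟩ := hev.exists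
    filter_upwards [eventually_ge_atTop (L k)] with N hN
    have h1 := hkey j k N
    rw [hsum k N hN] at h1
    have h2 : p j ((∑ n ∈ range N, a n • e n) - x)
        ≤ p j ((∑ n ∈ range N, a n • e n) - y k) + p j (y k - x) := by
      have h3 : (∑ n ∈ range N, a n • e n) - x
          = ((∑ n ∈ range N, a n • e n) - y k) + (y k - x) := by abel
      rw [h3]; exact map_add_le_add _ _ _
    have h4 : p j (x - y k) = p j (y k - x) := map_sub_rev _ _ _
    rw [h4] at h1
    linarith
  exact ⟨a, hexist, fun a' ha' => huniq a' a x ha' hexist⟩
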